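/- In the upper half plane with hyperbolic area density 1/(4v²) du dv, the region B*₀ = {z = re^{iθ} : 0 < r < 1, arccos(r/(2r₁)) < θ < arccos(−r/(2r₋₁))} (the part of the unit half-disk at 0 lying outside the two circles |z − r₋₁| = r₋₁ and |z + r₁| = r₁) has finite hyperbolic area, bounded by C·(1/r₋₁ + 1/r₁) for a universal constant C, whenever r₋₁, r₁ ≥ 1. -/

import Mathlib

set_option maxHeartbeats 800000

open MeasureTheory Complex

lemma region_subset (rm1 r1 : ℝ) (hm : 1 ≤ rm1) (h1 : 1 ≤ r1) :
    {z : ℂ | 0 < ‖z‖ ∧ ‖z‖ < 1 ∧ 0 < z.im ∧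
        Real.arccos (‖z‖ / (2 * r1)) < Complex.arg z ∧
        Complex.arg z < Real.arccos (-(‖z‖ / (2 * rm1)))} ⊆
    {z : ℂ | 0 < z.im ∧ z.im < 1 ∧ -(2 / (3 * rm1)) * z.im ^ 2 < z.re ∧
        z.re < (2 / (3 * r1)) * z.im ^ 2} := by
  rintro z ⟨hr0, hr1, him, ha1, ha2⟩
  have hz0 : z ≠ 0 := by
    intro h; rw [h] at hr0; simp at hr0
  set r := ‖z‖ with hr
  set θ := Complex.arg z with hθ
  set c := Real.cos θ with hc
  set s := Real.sin θ with hs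
  clear_value c s
  have hrm1 : (0:ℝ) < rm1 := lt_of_lt_of_le one_pos hm
  have hr1' : (0:ℝ) < r1 := lt_of_lt_of_le one_pos h1
  have hb1 : r / (2 * r1) ≤ 1 := by
    rw [div_le_one (by positivity)]; nlinarith
  have hb1' : (-1:ℝ) ≤ r / (2 * r1) := by
    have : (0:ℝ) ≤ r / (2 * r1) := by positivity
    linarith
  have hb2a : r / (2 * rm1) ≤ 1 := by
    rw [div_le_one (by positivity)]; nlinarith
  have hb2 : -(r / (2 * rm1)) ≤ 1 := by
    have : (0:ℝ) ≤ r / (2 * rm1) := by positivity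
    linarith
  have hb2' : (-1:ℝ) ≤ -(r / (2 * rm1)) := by linarith
  have hθpi : θ ≤ Real.pi := Complex.arg_le_pi z
  have hθ0 : 0 ≤ θ := le_of_lt (lt_of_le_of_lt (Real.arccos_nonneg _) ha1)
  have hcos1 : c < r / (2 * r1) := by
    have := Real.cos_lt_cos_of_nonneg_of_le_pi (Real.arccos_nonneg _) hθpi ha1
    rwa [Real.cos_arccos hb1' hb1, ← hc] at this
  have hcos2 : -(r / (2 * rm1)) < c := by
    have := Real.cos_lt_cos_of_nonneg_of_le_pi hθ0 (Real.arccos_le_pi _) ha2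
    rwa [Real.cos_arccos hb2' hb2, ← hc] at this
  have hc1 : c * (2 * r1) < r := by
    rwa [lt_div_iff₀ (by positivity)] at hcos1
  have hc2 : -r < c * (2 * rm1) := by
    rw [← neg_div] at hcos2
    rw [div_lt_iff₀ (by positivity)] at hcos2
    linarith
  have hre : z.re = r * c := by
    rw [hc, hθ, Complex.cos_arg hz0, hr]; field_simp
  have him' : z.im = r * s := by
    rw [hs, hθ, Complex.sin_arg, hr]; field_simp
  have hsin0 : 0 ≤ s := by rw [hs]; exact Real.sin_nonneg_of_nonneg_of_le_pi hθ0 hθpi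
  have hclt : c < r / 2 := by
    rcases le_or_gt c 0 with h | h
    · have : 0 < r / 2 := by positivity
      linarith
    · nlinarith
  have hcgt : -(r / 2) < c := by
    rcases le_or_gt 0 c with h | h
    · have : 0 < r / 2 := by positivity
      linarith
    · nlinarith
  have hcsq : c ^ 2 < 1 / 4 := by nlinarith
  have hsinsq : 3 / 4 ≤ s ^ 2 := by
    have := Real.sin_sq_add_cos_sq θ
    rw [← hs, ← hc] at this
    nlinarith
  have hrsq : r ^ 2 ≤ (4 / 3) * z.im ^ 2 := by
    rw [him']; nlinarith [mul_le_mul_of_nonneg_left hsinsq (sq_nonneg r)]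
  have himlt1 : z.im < 1 := by
    rw [him']
    nlinarith [Real.sin_le_one θ]
  refine ⟨him, himlt1, ?_, ?_⟩
  · rw [hre, neg_mul, div_mul_eq_mul_div, neg_lt,
      lt_div_iff₀ (by positivity : (0:ℝ) < 3 * rm1)]
    nlinarith [mul_lt_mul_of_pos_left hc2 hr0]
  · rw [hre, div_mul_eq_mul_div, lt_div_iff₀ (by positivity : (0:ℝ) < 3 * r1)]
    nlinarith [mul_lt_mul_of_pos_left hc1 hr0]


lemma strip_integral (a b : ℝ) (ha : 0 ≤ a) (hb : 0 ≤ b) :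
    (∫⁻ z in {z : ℂ | 0 < z.im ∧ z.im < 1 ∧ -a * z.im ^ 2 < z.re ∧ z.re < b * z.im ^ 2},
      ENNReal.ofReal (1 / (4 * z.im ^ 2)) ∂volume) = ENNReal.ofReal ((a + b) / 4) := by
  set T : Set (ℝ × ℝ) := {p | 0 < p.2 ∧ p.2 < 1 ∧ -a * p.2 ^ 2 < p.1 ∧ p.1 < b * p.2 ^ 2} with hT
  have hTmeas : MeasurableSet T := by
    apply MeasurableSet.inter (measurableSet_lt measurable_const measurable_snd)
    apply MeasurableSet.inter (measurableSet_lt measurable_snd measurable_const)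
    exact (measurableSet_lt (by fun_prop) measurable_fst).inter
      (measurableSet_lt measurable_fst (by fun_prop))
  have key := Complex.volume_preserving_equiv_real_prod.setLIntegral_comp_preimage_emb
    Complex.measurableEquivRealProd.measurableEmbedding
    (fun p : ℝ × ℝ => ENNReal.ofReal (1 / (4 * p.2 ^ 2))) T
  have hpre : Complex.measurableEquivRealProd ⁻¹' T =
      {z : ℂ | 0 < z.im ∧ z.im < 1 ∧ -a * z.im ^ 2 < z.re ∧ z.re < b * z.im ^ 2} := rfl
  rw [hpre] at key
  simp only [show ∀ z : ℂ, (measurableEquivRealProd z).2 = z.im from fun _ => rfl] at key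
  rw [key]
  -- now compute the integral over T ⊆ ℝ × ℝ
  have hg : Measurable (fun p : ℝ × ℝ => ENNReal.ofReal (1 / (4 * p.2 ^ 2))) := by fun_prop
  rw [← lintegral_indicator hTmeas _, Measure.volume_eq_prod, lintegral_prod_symm
    _ ((hg.indicator hTmeas).aemeasurable)]
  have inner : ∀ y : ℝ, (∫⁻ x, T.indicator (fun p : ℝ × ℝ => ENNReal.ofReal (1 / (4 * p.2 ^ 2))) (x, y) ∂volume)
      = (Set.Ioo (0:ℝ) 1).indicator (fun _ => ENNReal.ofReal ((a + b) / 4)) y := by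
    intro y
    by_cases hy : y ∈ Set.Ioo (0:ℝ) 1
    · have h1 : ∀ x : ℝ, T.indicator (fun p : ℝ × ℝ => ENNReal.ofReal (1 / (4 * p.2 ^ 2))) (x, y)
          = (Set.Ioo (-a * y ^ 2) (b * y ^ 2)).indicator (fun _ => ENNReal.ofReal (1 / (4 * y ^ 2))) x := by
        intro x
        by_cases hx : x ∈ Set.Ioo (-a * y ^ 2) (b * y ^ 2)
        · rw [Set.indicator_of_mem hx, Set.indicator_of_mem]
          exact ⟨hy.1, hy.2, hx.1, hx.2⟩
        · rw [Set.indicator_of_notMem hx, Set.indicator_of_notMem]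
          intro hmem
          exact hx ⟨hmem.2.2.1, hmem.2.2.2⟩
      simp only [h1]
      rw [lintegral_indicator_const measurableSet_Ioo _, Real.volume_Ioo]
      rw [← ENNReal.ofReal_mul (by positivity), Set.indicator_of_mem hy]
      congr 1
      have hy0 : 0 < y := hy.1
      have : b * y ^ 2 - -a * y ^ 2 = (a + b) * y ^ 2 := by ring
      rw [this]
      field_simp
    · rw [Set.indicator_of_notMem hy]
      have h1 : ∀ x : ℝ, T.indicator (fun p : ℝ × ℝ => ENNReal.ofReal (1 / (4 * p.2 ^ 2))) (x, y) = 0 := by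
        intro x
        rw [Set.indicator_of_notMem]
        intro hmem
        exact hy ⟨hmem.1, hmem.2.1⟩
      simp only [h1, lintegral_zero]
  simp only [inner]
  rw [lintegral_indicator_const measurableSet_Ioo _, Real.volume_Ioo]
  simp


/-- the region B*₀ = {re^{iθ} : 0 < r < 1,
arccos(r/(2r₁)) < θ < arccos(−r/(2r₋₁))} of the upper half plane has hyperbolic area
(density 1/(4v²)) bounded by C·(1/r₋₁ + 1/r₁) for a universal constant C,
whenever r₋₁, r₁ ≥ 1. -/
theorem hyperbolic_area_cusp_region :
    ∃ C : ℝ, 0 < C ∧ ∀ rm1 r1 : ℝ, 1 ≤ rm1 → 1 ≤ r1 →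
      (∫⁻ z in {z : ℂ | 0 < ‖z‖ ∧ ‖z‖ < 1 ∧ 0 < z.im ∧
            Real.arccos (‖z‖ / (2 * r1)) < Complex.arg z ∧
            Complex.arg z < Real.arccos (-(‖z‖ / (2 * rm1)))},
          ENNReal.ofReal (1 / (4 * z.im ^ 2)) ∂volume)
        ≤ ENNReal.ofReal (C * (1 / rm1 + 1 / r1)) := by
  refine ⟨1/6, by norm_num, fun rm1 r1 hm h1 => ?_⟩
  have hrm1 : (0:ℝ) < rm1 := lt_of_lt_of_le one_pos hm
  have hr1' : (0:ℝ) < r1 := lt_of_lt_of_le one_pos h1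
  calc (∫⁻ z in {z : ℂ | 0 < ‖z‖ ∧ ‖z‖ < 1 ∧ 0 < z.im ∧
            Real.arccos (‖z‖ / (2 * r1)) < Complex.arg z ∧
            Complex.arg z < Real.arccos (-(‖z‖ / (2 * rm1)))},
          ENNReal.ofReal (1 / (4 * z.im ^ 2)) ∂volume)
      ≤ (∫⁻ z in {z : ℂ | 0 < z.im ∧ z.im < 1 ∧ -(2 / (3 * rm1)) * z.im ^ 2 < z.re ∧
            z.re < (2 / (3 * r1)) * z.im ^ 2},
          ENNReal.ofReal (1 / (4 * z.im ^ 2)) ∂volume) :=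
        lintegral_mono' (Measure.restrict_mono (region_subset rm1 r1 hm h1) le_rfl) le_rfl
    _ = ENNReal.ofReal ((2 / (3 * rm1) + 2 / (3 * r1)) / 4) :=
        strip_integral _ _ (by positivity) (by positivity)
    _ = ENNReal.ofReal (1/6 * (1 / rm1 + 1 / r1)) := by
        congr 1
        field_simp
        ring
    _ ≤ ENNReal.ofReal (1/6 * (1 / rm1 + 1 / r1)) := le_rfl
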